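/- For all natural numbers n and m, the number of strictly monotone maps c : Fin(m+1) → Finset (Fin (n+1)) with c 0 ≠ ∅ equals the number of strictly monotone maps c : Fin(m+1) → Finset (Fin (n+1)) with c 0 ≠ ∅ and c (Fin.last m) ≠ Finset.univ, plus the number of strictly monotone maps c : Fin m → Finset (Fin (n+1)) all of whose values are nonempty and proper (≠ Finset.univ). (This is the cardinal-sequence form of the isomorphism Con(Sd S₊[n−1]) ≅ Sd Γ₊[n]: the subdivision of Γ₊[n] is a cone on the subdivision of its boundary.) -/

import Mathlib

open Finset in
lemma sd_snoc_strictMono {n m : ℕ} (d : Fin m → Finset (Fin (n + 1)))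
    (hd : StrictMono d) (hu : ∀ i, d i ≠ Finset.univ) :
    StrictMono (Fin.snoc d Finset.univ : Fin (m + 1) → Finset (Fin (n + 1))) := by
  intro i j hij
  rcases Fin.eq_castSucc_or_eq_last j with ⟨j', rfl⟩ | rfl
  · rcases Fin.eq_castSucc_or_eq_last i with ⟨i', rfl⟩ | rfl
    · rw [Fin.snoc_castSucc, Fin.snoc_castSucc]
      exact hd (Fin.castSucc_lt_castSucc_iff.mp hij)
    · exact absurd (hij.trans (Fin.castSucc_lt_last j')) (lt_irrefl _)
  · rcases Fin.eq_castSucc_or_eq_last i with ⟨i', rfl⟩ | rfl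
    · rw [Fin.snoc_castSucc, Fin.snoc_last]
      exact Finset.ssubset_univ_iff.mpr (hu i')
    · exact absurd hij (lt_irrefl _)

lemma sd_snoc_anchored {n m : ℕ} (d : Fin m → Finset (Fin (n + 1)))
    (hd : ∀ i, d i ≠ ∅) :
    (Fin.snoc d Finset.univ : Fin (m + 1) → Finset (Fin (n + 1))) 0 ≠ ∅ := by
  cases m with
  | zero =>
    have h0 : (0 : Fin 1) = Fin.last 0 := rfl
    rw [h0, Fin.snoc_last]
    exact Finset.univ_nonempty.ne_empty
  | succ k =>
    have h0 : (0 : Fin (k + 2)) = Fin.castSucc 0 := rfl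
    rw [h0, Fin.snoc_castSucc]
    exact hd 0

theorem sd_cone_decomposition (n m : ℕ) :
    Nat.card {c : Fin (m + 1) → Finset (Fin (n + 1)) // StrictMono c ∧ c 0 ≠ ∅} =
      Nat.card {c : Fin (m + 1) → Finset (Fin (n + 1)) //
          StrictMono c ∧ c 0 ≠ ∅ ∧ c (Fin.last m) ≠ Finset.univ} +
      Nat.card {c : Fin m → Finset (Fin (n + 1)) //
          StrictMono c ∧ ∀ i, c i ≠ ∅ ∧ c i ≠ Finset.univ} := by
  classical
  have e : {c : Fin (m + 1) → Finset (Fin (n + 1)) // StrictMono c ∧ c 0 ≠ ∅} ≃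
      {c : Fin (m + 1) → Finset (Fin (n + 1)) //
          StrictMono c ∧ c 0 ≠ ∅ ∧ c (Fin.last m) ≠ Finset.univ} ⊕
      {c : Fin m → Finset (Fin (n + 1)) //
          StrictMono c ∧ ∀ i, c i ≠ ∅ ∧ c i ≠ Finset.univ} :=
    { toFun := fun c =>
        if h : c.1 (Fin.last m) = Finset.univ then
          Sum.inr ⟨fun i => c.1 i.castSucc,
            fun i j hij => c.2.1 (Fin.castSucc_lt_castSucc_iff.mpr hij),
            fun i => ⟨fun he => c.2.2 (Finset.subset_empty.mp
                (le_of_le_of_eq (c.2.1.monotone (Fin.zero_le _)) he)),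
              fun hu => (c.2.1 (Fin.castSucc_lt_last i)).ne (hu.trans h.symm)⟩⟩
        else Sum.inl ⟨c.1, c.2.1, c.2.2, h⟩
      invFun := Sum.elim (fun c => ⟨c.1, c.2.1, c.2.2.1⟩)
        (fun d => ⟨Fin.snoc d.1 Finset.univ,
          sd_snoc_strictMono d.1 d.2.1 (fun i => (d.2.2 i).2),
          sd_snoc_anchored d.1 (fun i => (d.2.2 i).1)⟩)
      left_inv := by
        rintro ⟨c, hc, h0⟩
        by_cases h : c (Fin.last m) = Finset.univ
        · simp only [h, dif_pos]
          apply Subtype.ext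
          funext i
          rcases Fin.eq_castSucc_or_eq_last i with ⟨i', rfl⟩ | rfl
          · simp [Fin.snoc_castSucc]
          · simp [Fin.snoc_last, h]
        · simp [h]
      right_inv := by
        rintro (⟨c, hc, h0, hu⟩ | ⟨d, hd, hne⟩)
        · simp [hu]
        · have h : (Fin.snoc d Finset.univ : Fin (m + 1) → Finset (Fin (n + 1)))
              (Fin.last m) = Finset.univ := Fin.snoc_last _ _
          dsimp only [Sum.elim_inr]
          rw [dif_pos h]
          congr 1
          apply Subtype.ext
          funext i
          simp [Fin.snoc_castSucc] }
  rw [Nat.card_congr e, Nat.card_sum]
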